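/- Suppose each item d in a finite set D is independently assigned to group k with probability p_k, and the per-item metric decomposes as U(d) = u(d)·h(R(d)) for a merged random ranker R. Then the conditional expectation (over the experiment randomness, given features) of the normalized group-k readout (1/p_k)·∑_{d ∈ D_k} U(d) equals ∑_{j} u(J_k(j))·h^k(j), where J_k is the inverse of ranker R_k and h^k(j) = ∑_{j'} P(R(J_k(j)) = j' | J_k(j) ∈ D_k)·h(j'). -/

import Mathlib

open MeasureTheory

/-- the expectation (over the experiment randomness) of the
normalized group-`k` readout `(1/p)·∑_{d ∈ D_k} u(d)·h(R(d))` equals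
`∑_j u(J_k(j))·h^k(j)`, where `J_k = R_k⁻¹` and
`h^k(j) = ∑_{j'} P(R(J_k(j)) = j' | J_k(j) ∈ D_k)·h(j')`. -/
theorem expected_readout_eq_convoluted {Ω D : Type*} [MeasurableSpace Ω] [Fintype D]
    (μ : Measure Ω) [IsProbabilityMeasure μ]
    (p : ℝ) (hp : 0 < p)
    (A : D → Set Ω) (hA : ∀ d, MeasurableSet (A d))
    (hAp : ∀ d, μ (A d) = ENNReal.ofReal p)
    (R : Ω → D ≃ Fin (Fintype.card D))
    (hR : ∀ (d : D) (j : Fin (Fintype.card D)), MeasurableSet {ω | R ω d = j})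
    (Rk : D ≃ Fin (Fintype.card D))
    (u : D → ℝ) (h : Fin (Fintype.card D) → ℝ) :
    ∫ ω, (1 / p) * ∑ d, (A d).indicator (fun _ => (1 : ℝ)) ω * (u d * h (R ω d)) ∂μ
      = ∑ j, u (Rk.symm j) *
          ∑ j', ((μ (A (Rk.symm j) ∩ {ω | R ω (Rk.symm j) = j'})).toReal
                    / (μ (A (Rk.symm j))).toReal) * h j' := by
  classical
  have hmeas : ∀ (d : D) (j' : Fin (Fintype.card D)),
      MeasurableSet (A d ∩ {ω | R ω d = j'}) := fun d j' => (hA d).inter (hR d j')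
  have key : ∀ ω, (1 / p) * ∑ d, (A d).indicator (fun _ => (1 : ℝ)) ω * (u d * h (R ω d))
      = ∑ d, ∑ j', (1 / p) *
          ((A d ∩ {ω | R ω d = j'}).indicator (fun _ => u d * h j') ω) := by
    intro ω
    rw [Finset.mul_sum]
    refine Finset.sum_congr rfl fun d _ => ?_
    rw [Finset.sum_eq_single (R ω d)]
    · by_cases hω : ω ∈ A d
      · have hm : ω ∈ A d ∩ {ω' | R ω' d = R ω d} := ⟨hω, rfl⟩
        rw [Set.indicator_of_mem hω, Set.indicator_of_mem hm]
        ring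
      · rw [Set.indicator_of_notMem hω,
          Set.indicator_of_notMem (fun hc => hω hc.1)]
        ring
    · intro j' _ hj'
      rw [Set.indicator_of_notMem (fun hc => hj' (show (R ω) d = j' from hc.2).symm), mul_zero]
    · intro hc
      exact absurd (Finset.mem_univ _) hc
  simp_rw [key]
  have hint : ∀ (d : D) (j' : Fin (Fintype.card D)),
      Integrable (fun ω => (1 / p) *
        ((A d ∩ {ω | R ω d = j'}).indicator (fun _ => u d * h j') ω)) μ :=
    fun d j' => ((integrable_const (u d * h j')).indicator (hmeas d j')).const_mul _
  rw [integral_finset_sum _ (fun d _ => integrable_finset_sum _ (fun j' _ => hint d j'))]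
  have hstep : ∀ d : D, (∫ ω, ∑ j', (1 / p) *
        ((A d ∩ {ω | R ω d = j'}).indicator (fun _ => u d * h j') ω) ∂μ)
      = ∑ j', (1 / p) * ((μ (A d ∩ {ω | R ω d = j'})).toReal * (u d * h j')) := by
    intro d
    rw [integral_finset_sum _ (fun j' _ => hint d j')]
    refine Finset.sum_congr rfl fun j' _ => ?_
    rw [integral_const_mul, integral_indicator_const _ (hmeas d j'), smul_eq_mul, measureReal_def]
  simp_rw [hstep]
  rw [← Equiv.sum_comp Rk.symm (fun d => ∑ j', (1 / p) *
      ((μ (A d ∩ {ω | R ω d = j'})).toReal * (u d * h j')))]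
  refine Finset.sum_congr rfl fun j _ => ?_
  rw [Finset.mul_sum]
  refine Finset.sum_congr rfl fun j' _ => ?_
  rw [hAp, ENNReal.toReal_ofReal hp.le]
  ring
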